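/- Let ∇ be a Type B connection with C₁₁¹ = C₁₂² − 1, C₁₁² = 0, C₁₂¹ = 0, C₂₂¹ = ε = ±1, C₂₂² = 0 and μ = C₁₂²/2 ≠ 0. Then the two functions f₁(x¹,x²) = (x¹)^α and f₂(x¹,x²) = (x¹)^α x², where α = μ(1 + C₁₂² − C₁₁¹) = C₁₂², both satisfy the quasi-Einstein equation H(f) = μ f ρ_s, so dim E(μ,∇) ≥ 2. -/

import Mathlib

open Real

/-- Partial derivative ∂_i on ℝ². -/
noncomputable def pd (i : Fin 2) (f : ℝ × ℝ → ℝ) : ℝ × ℝ → ℝ :=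
  fun p => if i = 0 then deriv (fun t => f (t, p.2)) p.1
           else deriv (fun t => f (p.1, t)) p.2

/-- Affine Hessian H(f)_{ij} = ∂_i∂_j f − Σ_k Γ_{ij}^k ∂_k f. -/
noncomputable def Hess (Γ : Fin 2 → Fin 2 → Fin 2 → (ℝ × ℝ → ℝ))
    (f : ℝ × ℝ → ℝ) (i j : Fin 2) : ℝ × ℝ → ℝ :=
  fun p => pd i (pd j f) p - ∑ k, Γ i j k p * pd k f p

/-- Ricci tensor ρ_{jk} = ∂_i Γ_{jk}^i − ∂_j Γ_{ik}^i + Γ_{il}^i Γ_{jk}^l − Γ_{jl}^i Γ_{ik}^l. -/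
noncomputable def Ric (Γ : Fin 2 → Fin 2 → Fin 2 → (ℝ × ℝ → ℝ)) (j k : Fin 2) :
    ℝ × ℝ → ℝ :=
  fun p => (∑ i, pd i (Γ j k i) p) - (∑ i, pd j (Γ i k i) p)
    + (∑ i, ∑ l, Γ i l i p * Γ j k l p) - (∑ i, ∑ l, Γ j l i p * Γ i k l p)

/-- Symmetrized Ricci tensor. -/
noncomputable def RicS (Γ : Fin 2 → Fin 2 → Fin 2 → (ℝ × ℝ → ℝ)) (i j : Fin 2) :
    ℝ × ℝ → ℝ :=
  fun p => (Ric Γ i j p + Ric Γ j i p) / 2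

/-- Covariant derivative of the Ricci tensor: (∇ρ)(i,j;k). -/
noncomputable def nabRic (Γ : Fin 2 → Fin 2 → Fin 2 → (ℝ × ℝ → ℝ)) (i j k : Fin 2) :
    ℝ × ℝ → ℝ :=
  fun p => pd k (Ric Γ i j) p - ∑ l, Γ k i l p * Ric Γ l j p
    - ∑ l, Γ k j l p * Ric Γ i l p

/-- Type B Christoffel symbols Γ_{ij}^k = C_{ij}^k / x¹. -/
noncomputable def ΓB (C : Fin 2 → Fin 2 → Fin 2 → ℝ) :
    Fin 2 → Fin 2 → Fin 2 → (ℝ × ℝ → ℝ) :=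
  fun i j k p => C i j k / p.1

/-- Type B with C₁₁¹ = C₁₂² − 1, C₁₁² = 0, C₁₂¹ = 0, C₂₂¹ = ε, C₂₂² = 0 and
μ = C₁₂²/2 ≠ 0: both (x¹)^α and (x¹)^α x², α = C₁₂², solve H(f) = μ f ρ_s. -/
lemma ΓB_app (C : Fin 2 → Fin 2 → Fin 2 → ℝ) (i j k : Fin 2) :
    ΓB C i j k = fun p => C i j k / p.1 := rfl

lemma pdG0 (a : ℝ) (p : ℝ × ℝ) : pd 0 (fun q => a / q.1) p = -(a / p.1 ^ 2) := by
  simp [pd, div_eq_mul_inv, deriv_inv]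

lemma pdG1 (a : ℝ) (p : ℝ × ℝ) : pd 1 (fun q => a / q.1) p = 0 := by
  simp [pd]

lemma pd0_f1 (c : ℝ) (p : ℝ × ℝ) (hx : p.1 ≠ 0) :
    pd 0 (fun q : ℝ × ℝ => q.1 ^ c) p = c * p.1 ^ (c - 1) := by
  simp only [pd, if_pos rfl, if_true]
  exact Real.deriv_rpow_const _ _

lemma pd1_f1 (c : ℝ) (p : ℝ × ℝ) : pd 1 (fun q : ℝ × ℝ => q.1 ^ c) p = 0 := by
  simp [pd]

lemma pd_pd1_f1 (i : Fin 2) (c : ℝ) (p : ℝ × ℝ) :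
    pd i (pd 1 (fun q : ℝ × ℝ => q.1 ^ c)) p = 0 := by
  have : pd 1 (fun q : ℝ × ℝ => q.1 ^ c) = fun _ => 0 := funext fun p => pd1_f1 c p
  rw [this]; simp [pd]

lemma pd1_pd0_f1 (c : ℝ) (p : ℝ × ℝ) :
    pd 1 (pd 0 (fun q : ℝ × ℝ => q.1 ^ c)) p = 0 := by
  simp [pd]

lemma pd0_pd0_f1 (c : ℝ) (p : ℝ × ℝ) (hx : 0 < p.1) :
    pd 0 (pd 0 (fun q : ℝ × ℝ => q.1 ^ c)) p = c * ((c - 1) * p.1 ^ (c - 2)) := by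
  simp only [pd, if_pos rfl, if_true]
  have hev : (fun t => deriv (fun s : ℝ => s ^ c) t) =ᶠ[nhds p.1] (fun t => c * t ^ (c - 1)) := by
    filter_upwards [eventually_ne_nhds hx.ne'] with t ht
    exact Real.deriv_rpow_const _ _
  rw [hev.deriv_eq, ((Real.hasDerivAt_rpow_const (Or.inl hx.ne')).const_mul c).deriv]
  ring_nf

lemma pd1_f2 (c : ℝ) (p : ℝ × ℝ) :
    pd 1 (fun q : ℝ × ℝ => q.1 ^ c * q.2) p = p.1 ^ c := by
  simp only [pd, if_neg (by decide : ¬(1 : Fin 2) = 0)]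
  simpa using ((hasDerivAt_id p.2).const_mul (p.1 ^ c)).deriv

lemma pd0_f2 (c : ℝ) (p : ℝ × ℝ) (hx : p.1 ≠ 0) :
    pd 0 (fun q : ℝ × ℝ => q.1 ^ c * q.2) p = c * p.1 ^ (c - 1) * p.2 := by
  simp only [pd, if_pos rfl, if_true]
  exact ((Real.hasDerivAt_rpow_const (Or.inl hx)).mul_const p.2).deriv

lemma pd0_pd1_f2 (c : ℝ) (p : ℝ × ℝ) (hx : p.1 ≠ 0) :
    pd 0 (pd 1 (fun q : ℝ × ℝ => q.1 ^ c * q.2)) p = c * p.1 ^ (c - 1) := by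
  have : pd 1 (fun q : ℝ × ℝ => q.1 ^ c * q.2) = fun q : ℝ × ℝ => q.1 ^ c :=
    funext fun q => pd1_f2 c q
  rw [this]; exact pd0_f1 c p hx

lemma pd1_pd1_f2 (c : ℝ) (p : ℝ × ℝ) :
    pd 1 (pd 1 (fun q : ℝ × ℝ => q.1 ^ c * q.2)) p = 0 := by
  have : pd 1 (fun q : ℝ × ℝ => q.1 ^ c * q.2) = fun q : ℝ × ℝ => q.1 ^ c :=
    funext fun q => pd1_f2 c q
  rw [this]; exact pd1_f1 c p

lemma pd1_pd0_f2 (c : ℝ) (p : ℝ × ℝ) (hx : p.1 ≠ 0) :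
    pd 1 (pd 0 (fun q : ℝ × ℝ => q.1 ^ c * q.2)) p = c * p.1 ^ (c - 1) := by
  simp only [pd, if_neg (by decide : ¬(1 : Fin 2) = 0), if_pos rfl, if_true]
  have : (fun t => deriv (fun s : ℝ => s ^ c * t) p.1) = fun t => c * p.1 ^ (c - 1) * t := by
    funext t
    exact ((Real.hasDerivAt_rpow_const (Or.inl hx)).mul_const t).deriv
  rw [this]
  simpa using ((hasDerivAt_id p.2).const_mul (c * p.1 ^ (c - 1))).deriv

lemma pd0_pd0_f2 (c : ℝ) (p : ℝ × ℝ) (hx : 0 < p.1) :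
    pd 0 (pd 0 (fun q : ℝ × ℝ => q.1 ^ c * q.2)) p = c * ((c - 1) * p.1 ^ (c - 2)) * p.2 := by
  simp only [pd, if_pos rfl, if_true]
  have hev : (fun t => deriv (fun s : ℝ => s ^ c * p.2) t)
      =ᶠ[nhds p.1] (fun t => c * t ^ (c - 1) * p.2) := by
    filter_upwards [eventually_ne_nhds hx.ne'] with t ht
    exact ((Real.hasDerivAt_rpow_const (Or.inl ht)).mul_const p.2).deriv
  rw [hev.deriv_eq,
    (((Real.hasDerivAt_rpow_const (Or.inl hx.ne')).const_mul c).mul_const p.2).deriv]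
  ring_nf

set_option maxHeartbeats 1000000 in
theorem typeB_two_dim_eigenspace
    (C : Fin 2 → Fin 2 → Fin 2 → ℝ)
    (hsym : ∀ i j k, C i j k = C j i k)
    (ε : ℝ) (hε : ε = 1 ∨ ε = -1)
    (h1 : C 0 0 0 = C 0 1 1 - 1) (h2 : C 0 0 1 = 0) (h3 : C 0 1 0 = 0)
    (h4 : C 1 1 0 = ε) (h5 : C 1 1 1 = 0)
    (μ : ℝ) (hμ : μ = C 0 1 1 / 2) (hμ0 : μ ≠ 0) :
    (∀ i j : Fin 2, ∀ p : ℝ × ℝ, 0 < p.1 →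
        Hess (ΓB C) (fun q => q.1 ^ (C 0 1 1)) i j p
          = μ * (p.1 ^ (C 0 1 1)) * RicS (ΓB C) i j p) ∧
    (∀ i j : Fin 2, ∀ p : ℝ × ℝ, 0 < p.1 →
        Hess (ΓB C) (fun q => q.1 ^ (C 0 1 1) * q.2) i j p
          = μ * (p.1 ^ (C 0 1 1) * p.2) * RicS (ΓB C) i j p) := by
  have h6 : C 1 0 1 = C 0 1 1 := hsym 1 0 1
  have h7 : C 1 0 0 = 0 := (hsym 1 0 0).trans h3
  constructor <;> intro i j p hp <;>
  · have e1 : p.1 ^ (C 0 1 1 - 1) = p.1 ^ C 0 1 1 / p.1 := by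
      rw [Real.rpow_sub hp, Real.rpow_one]
    have e2 : p.1 ^ (C 0 1 1 - 2) = p.1 ^ C 0 1 1 / p.1 ^ (2 : ℕ) := by
      rw [Real.rpow_sub hp, show (2:ℝ) = ((2:ℕ):ℝ) by norm_num, Real.rpow_natCast]
    fin_cases i <;> fin_cases j <;>
    · simp only [Hess, RicS, Ric, ΓB, Fin.sum_univ_two, Fin.isValue, Fin.mk_zero, Fin.mk_one, ΓB_app,
        pdG0, pdG1, pd1_f1, pd_pd1_f1, pd1_pd0_f1, pd1_f2, pd1_pd1_f2,
        pd0_f1 _ _ hp.ne', pd0_pd0_f1 _ _ hp, pd0_f2 _ _ hp.ne',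
        pd0_pd1_f2 _ _ hp.ne', pd1_pd0_f2 _ _ hp.ne', pd0_pd0_f2 _ _ hp,
        h1, h2, h3, h4, h5, h6, h7, hμ, e1, e2]
      try field_simp
      try ring
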